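/- In the setup below, suppose the coin flips are such that X_{ι(j)} = Z_{ι(j)} for every j < j* (i.e., the coin of the pair of W_j is tails for every j < j*). Then max_i X_i = W_{j*}. -/
import Mathlib


/-- Maximum of a function on `Fin n`, for `n > 0`. -/
noncomputable def finMax {n : ℕ} (hn : 0 < n) (f : Fin n → ℝ) : ℝ :=
  Finset.univ.sup' (Finset.univ_nonempty_iff.mpr (Fin.pos_iff_nonempty.mp hn)) f

/-- The gambler's reward when the values `X` arrive in the order given by the
permutation `π` and the gambler accepts the first arriving value strictly
exceeding the threshold `max_i X̃ i` (reward `0` if no value does). -/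
noncomputable def gamblerReward {n : ℕ} (hn : 0 < n) (π : Equiv.Perm (Fin n))
    (X Xt : Fin n → ℝ) : ℝ :=
  if h : (Finset.univ.filter (fun k => finMax hn Xt < X (π k))).Nonempty then
    X (π ((Finset.univ.filter (fun k => finMax hn Xt < X (π k))).min' h))
  else 0

/-- **The all-tails case of Proposition 3.3.** In the setup of the single-sample
analysis, if the coin flips `C` are such that `X (ι j) = Z (ι j)` for every
`j < jstar` (i.e., the coin of the pair of `W j` is tails for every `j` before
the pivotal index), then `max_i X i = W jstar`, where
`X i = Y i` if `C i` and `X i = Z i` otherwise. -/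
theorem prophet_all_tails_case
    -- the `2n` values: `Y i > Z i ≥ 0` for each pair `i`, all distinct
    (n : ℕ) (hn : 0 < n) (Y Z : Fin n → ℝ)
    (hZnonneg : ∀ i, 0 ≤ Z i) (hYZ : ∀ i, Z i < Y i)
    (hdistinct : Function.Injective (Sum.elim Y Z))
    -- `W 1 > W 2 > … > W (2n)` is the decreasing relabeling of the `2n` values
    (W : ℕ → ℝ) (hWanti : StrictAntiOn W (Set.Icc 1 (2 * n)))
    (hWrange : (Finset.Icc 1 (2 * n)).image W
      = Finset.univ.image Y ∪ Finset.univ.image Z)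
    -- `ι j` is the index of the pair containing `W j`
    (ι : ℕ → Fin n)
    (hι : ∀ j ∈ Finset.Icc 1 (2 * n), W j = Y (ι j) ∨ W j = Z (ι j))
    -- `jstar` is the pivotal index: the least `j` whose pair index repeats an earlier one
    (jstar : ℕ)
    (hjstar : IsLeast {j : ℕ | j ∈ Finset.Icc 1 (2 * n)
      ∧ ∃ ℓ, 1 ≤ ℓ ∧ ℓ < j ∧ ι ℓ = ι j} jstar)
    (C : Fin n → Bool)
    (htails : ∀ j, 1 ≤ j → j < jstar →
      (if C (ι j) then Y (ι j) else Z (ι j)) = Z (ι j)) :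
    finMax hn (fun i => if C i then Y i else Z i) = W jstar := by

  classical
  set X : Fin n → ℝ := fun i => if C i then Y i else Z i with hXdef
  have hYZne : ∀ i k : Fin n, Y i ≠ Z k := by
    intro i k h
    have := hdistinct (a₁ := Sum.inl i) (a₂ := Sum.inr k) h
    simp at this
  have hYinj : ∀ i k : Fin n, Y i = Y k → i = k := by
    intro i k h
    have := hdistinct (a₁ := Sum.inl i) (a₂ := Sum.inl k) h
    simpa using this
  obtain ⟨⟨hjmem, ℓ, hℓ1, hℓlt, hℓι⟩, hmin⟩ := hjstar
  have hjmem' := Finset.mem_Icc.mp hjmem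
  have hℓmem : ℓ ∈ Finset.Icc 1 (2*n) :=
    Finset.mem_Icc.mpr ⟨hℓ1, le_trans hℓlt.le hjmem'.2⟩
  have hjS : jstar ∈ Set.Icc 1 (2*n) := Set.mem_Icc.mpr hjmem'
  have hℓS : ℓ ∈ Set.Icc 1 (2*n) := Set.mem_Icc.mpr (Finset.mem_Icc.mp hℓmem)
  have hWlt : W jstar < W ℓ := hWanti hℓS hjS hℓlt
  -- W jstar = Z (ι jstar)
  have hWjZ : W jstar = Z (ι jstar) := by
    rcases hι jstar hjmem with h1 | h1
    · exfalso
      rcases hι ℓ hℓmem with h2 | h2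
      · rw [hℓι] at h2; rw [h1] at hWlt; rw [h2] at hWlt; exact lt_irrefl _ hWlt
      · rw [hℓι] at h2
        have : Z (ι jstar) < Y (ι jstar) := hYZ _
        rw [← h1, ← h2] at this
        exact lt_asymm hWlt this
    · exact h1
  -- the value W jstar is attained by X
  have hattain : X (ι jstar) = W jstar := by
    have := htails ℓ hℓ1 hℓlt
    rw [hℓι] at this
    simpa [hXdef, hWjZ] using this
  -- every value of X is a W j with j in range
  have hfind : ∀ i : Fin n, ∃ j, 1 ≤ j ∧ j ≤ 2*n ∧ W j = X i := by
    intro i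
    have hx : X i ∈ Finset.univ.image Y ∪ Finset.univ.image Z := by
      by_cases hc : C i
      · exact Finset.mem_union_left _ (Finset.mem_image.mpr ⟨i, Finset.mem_univ i, by simp [hXdef, hc]⟩)
      · exact Finset.mem_union_right _ (Finset.mem_image.mpr ⟨i, Finset.mem_univ i, by simp [hXdef, hc]⟩)
    rw [← hWrange] at hx
    rcases Finset.mem_image.mp hx with ⟨j, hj, hje⟩
    rcases Finset.mem_Icc.mp hj with ⟨h1, h2⟩
    exact ⟨j, h1, h2, hje⟩
  have hfindY : ∀ i : Fin n, ∃ j, 1 ≤ j ∧ j ≤ 2*n ∧ W j = Y i := by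
    intro i
    have hx : Y i ∈ Finset.univ.image Y ∪ Finset.univ.image Z :=
      Finset.mem_union_left _ (Finset.mem_image.mpr ⟨i, Finset.mem_univ i, rfl⟩)
    rw [← hWrange] at hx
    rcases Finset.mem_image.mp hx with ⟨j, hj, hje⟩
    rcases Finset.mem_Icc.mp hj with ⟨h1, h2⟩
    exact ⟨j, h1, h2, hje⟩
  -- upper bound
  have hub : ∀ i : Fin n, X i ≤ W jstar := by
    intro i
    obtain ⟨j, hj1, hj2, hje⟩ := hfind i
    have hjS' : j ∈ Set.Icc 1 (2*n) := Set.mem_Icc.mpr ⟨hj1, hj2⟩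
    rcases lt_or_ge j jstar with hlt | hge
    · exfalso
      have hXij : X i = Y i ∨ X i = Z i := by
        by_cases hc : C i
        · exact Or.inl (by simp [hXdef, hc])
        · exact Or.inr (by simp [hXdef, hc])
      have hιj := hι j (Finset.mem_Icc.mpr ⟨hj1, hj2⟩)
      rcases hXij with hxe | hxe
      · -- X i = Y i = W j
        rcases hιj with h2 | h2
        · have hii : i = ι j := hYinj _ _ (by rw [← hxe, ← hje, h2])
          have := htails j hj1 hlt
          rw [← hii] at this
          have : X i = Z i := by simpa [hXdef] using this
          rw [hxe] at this
          exact absurd this (ne_of_gt (hYZ i))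
        · exact hYZne i (ι j) (by rw [← hxe, ← hje, h2])
      · -- X i = Z i = W j
        rcases hιj with h2 | h2
        · exact hYZne (ι j) i (by rw [← h2, hje, hxe])
        · have hii : i = ι j := by
            have := hdistinct (a₁ := Sum.inr i) (a₂ := Sum.inr (ι j))
              (by simpa using (by rw [← hxe, ← hje, h2] : Z i = Z (ι j)))
            simpa using this
          obtain ⟨m, hm1, hm2, hme⟩ := hfindY i
          have hmS : m ∈ Set.Icc 1 (2*n) := Set.mem_Icc.mpr ⟨hm1, hm2⟩
          have hWmj : W j < W m := by
            rw [hme, hje, hxe]; exact hYZ i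
          have hmj : m < j := by
            rcases lt_trichotomy m j with h | h | h
            · exact h
            · exfalso; rw [h] at hWmj; exact lt_irrefl _ hWmj
            · exact absurd (hWanti hjS' hmS h) (lt_asymm hWmj)
          have hιm : ι m = ι j := by
            rcases hι m (Finset.mem_Icc.mpr ⟨hm1, hm2⟩) with h3 | h3
            · rw [← hii]; exact hYinj _ _ (by rw [← h3, hme])
            · exact absurd (by rw [← h3, hme] : Y i = Z (ι m)) (hYZne i (ι m))
          have : jstar ≤ j := hmin ⟨Finset.mem_Icc.mpr ⟨hj1, hj2⟩, m, hm1, hmj, hιm⟩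
          exact absurd hlt (not_lt.mpr this)
    · rw [← hje]
      rcases eq_or_lt_of_le hge with h | h
      · rw [h]
      · exact (hWanti hjS hjS' h).le
  apply le_antisymm
  · exact Finset.sup'_le _ _ (fun i _ => hub i)
  · rw [← hattain]
    exact Finset.le_sup' _ (Finset.mem_univ (ι jstar))
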